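/- Let T : W → V be a linear map between n-dimensional real inner product spaces, n ≥ 3, such that |Λ²T(ω)| ≤ |ω| for every ω ∈ Λ²(W), and suppose there exists an orthonormal basis {ε_i} of W with |Tε_i ∧ Tε_j| = 1 for all 1 ≤ i < j ≤ n. Then T is a linear isometry. -/

import Mathlib

open RealInnerProductSpace

private lemma stmt_15_exists_third {n : ℕ} (hn : 3 ≤ n) (j k : Fin n) :
    ∃ i : Fin n, i ≠ j ∧ i ≠ k := by
  by_contra h
  push_neg at h
  have hsub : (Finset.univ : Finset (Fin n)) ⊆ {j, k} := by
    intro i _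
    rcases eq_or_ne i j with hij | hij
    · simp [hij]
    · simp [h i hij]
  have hcard := Finset.card_le_card hsub
  have h2 : ({j, k} : Finset (Fin n)).card ≤ 2 := by
    calc ({j, k} : Finset (Fin n)).card ≤ ({k} : Finset (Fin n)).card + 1 :=
          Finset.card_insert_le _ _
      _ = 2 := by simp
  simp only [Finset.card_univ, Fintype.card_fin] at hcard
  omega

private lemma stmt_15_aux (n : ℕ) (hn : 3 ≤ n) (a : Fin n → Fin n → ℝ)
    (asymm : ∀ i j, a i j = a j i)
    (apos : ∀ i, 0 ≤ a i i)
    (hu : ∀ i j, i ≠ j → a i i * a j j - a i j * a i j = 1)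
    (key : ∀ i j k, i ≠ j → i ≠ k → j ≠ k → a i j * a k k = a i k * a j k) :
    ∀ i j, a i j = if i = j then 1 else 0 := by
  have pos : ∀ i j, i ≠ j → 0 < a i i := by
    intro i j hij
    have h1 := hu i j hij
    nlinarith [apos i, apos j, sq_nonneg (a i j)]
  have prod_zero : ∀ i j k, i ≠ j → i ≠ k → j ≠ k → a i j * a i k = 0 := by
    intro i j k hij hik hjk
    have eq1 := key i j k hij hik hjk
    have eq2 := key i k j hik hij hjk.symm
    rw [asymm k j] at eq2
    have hu' := hu j k hjk
    linear_combination (a i k * a j j) * eq1 + (a i k * a j k) * eq2 - (a i j * a i k) * hu'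
  have azero : ∀ j k, j ≠ k → a j k = 0 := by
    intro j k hjk
    obtain ⟨i, hij, hik⟩ := stmt_15_exists_third hn j k
    have h0 := prod_zero i j k hij hik hjk
    have h1 := key j k i hjk hij.symm hik.symm
    rw [asymm j i, asymm k i] at h1
    rw [h0] at h1
    have hipos : 0 < a i i := pos i j hij
    rcases mul_eq_zero.mp h1 with h | h
    · exact h
    · exact absurd h (ne_of_gt hipos)
  have bone : ∀ i, a i i = 1 := by
    intro i
    obtain ⟨j, hji, _⟩ := stmt_15_exists_third hn i i
    obtain ⟨k, hki, hkj⟩ := stmt_15_exists_third hn i j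
    have h1 : a i i * a j j = 1 := by
      have := hu i j hji.symm
      rw [azero i j hji.symm] at this
      linarith
    have h2 : a i i * a k k = 1 := by
      have := hu i k hki.symm
      rw [azero i k hki.symm] at this
      linarith
    have h3 : a j j * a k k = 1 := by
      have := hu j k hkj.symm
      rw [azero j k hkj.symm] at this
      linarith
    have hip : 0 < a i i := pos i j hji.symm
    have hjp : 0 < a j j := pos j i hji
    have hjk : a j j = a k k := mul_left_cancel₀ (ne_of_gt hip) (h1.trans h2.symm)
    have hj1 : a j j = 1 := by
      have : a j j * a j j = 1 := by rw [hjk] at h3 ⊢; exact h3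
      rcases mul_self_eq_one_iff.mp this with h | h
      · exact h
      · linarith
    rw [hj1, mul_one] at h1
    exact h1
  intro i j
  rcases eq_or_ne i j with h | h
  · simp [h, bone j]
  · simp [h, azero i j h]

/-- Rigidity core of Llarull's theorem: a linear map `T` between `n`-dimensional inner
product spaces (`n ≥ 3`) whose induced map on 2-vectors is norm-nonincreasing and sends
every basis 2-vector `ε_i∧ε_j` (i<j) to a unit vector is a linear isometry. -/
theorem stmt_15 (n : ℕ) (hn : 3 ≤ n)
    {W V LW LV : Type*}
    [NormedAddCommGroup W] [InnerProductSpace ℝ W]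
    [NormedAddCommGroup V] [InnerProductSpace ℝ V]
    [NormedAddCommGroup LW] [InnerProductSpace ℝ LW]
    [NormedAddCommGroup LV] [InnerProductSpace ℝ LV]
    (hdimW : Module.finrank ℝ W = n) (hdimV : Module.finrank ℝ V = n)
    (wW : W →ₗ[ℝ] W →ₗ[ℝ] LW) (wV : V →ₗ[ℝ] V →ₗ[ℝ] LV)
    (hWgram : ∀ u1 u2 v1 v2 : W, (inner ℝ (wW u1 u2) (wW v1 v2) : ℝ)
      = inner ℝ u1 v1 * inner ℝ u2 v2 - inner ℝ u1 v2 * inner ℝ u2 v1)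
    (hVgram : ∀ u1 u2 v1 v2 : V, (inner ℝ (wV u1 u2) (wV v1 v2) : ℝ)
      = inner ℝ u1 v1 * inner ℝ u2 v2 - inner ℝ u1 v2 * inner ℝ u2 v1)
    (T : W →ₗ[ℝ] V) (F : LW →ₗ[ℝ] LV)
    (hTF : ∀ u v : W, F (wW u v) = wV (T u) (T v))
    (hcontr : ∀ ω : LW, ‖F ω‖ ≤ ‖ω‖)
    (ε : OrthonormalBasis (Fin n) ℝ W)
    (hunit : ∀ i j, i < j → ‖wV (T (ε i)) (T (ε j))‖ = 1) :
    ∀ x : W, ‖T x‖ = ‖x‖ := by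
  classical
  have horth : ∀ i j : Fin n, (⟪ε i, ε j⟫ : ℝ) = if i = j then 1 else 0 :=
    orthonormal_iff_ite.mp ε.orthonormal
  -- the contraction property in squared / Gram form
  have contr : ∀ u v : W,
      (⟪T u, T u⟫ : ℝ) * ⟪T v, T v⟫ - ⟪T u, T v⟫ * ⟪T v, T u⟫
        ≤ (⟪u, u⟫ : ℝ) * ⟪v, v⟫ - ⟪u, v⟫ * ⟪v, u⟫ := by
    intro u v
    have h1 := hcontr (wW u v)
    have h2 : ‖F (wW u v)‖ * ‖F (wW u v)‖ ≤ ‖wW u v‖ * ‖wW u v‖ :=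
      mul_self_le_mul_self (norm_nonneg _) h1
    rw [← real_inner_self_eq_norm_mul_norm, ← real_inner_self_eq_norm_mul_norm,
      hTF, hVgram, hWgram] at h2
    exact h2
  -- Gram matrix of the image vectors
  set a : Fin n → Fin n → ℝ := fun i j => ⟪T (ε i), T (ε j)⟫ with ha
  have asymm : ∀ i j, a i j = a j i := fun i j => real_inner_comm _ _
  have apos : ∀ i, 0 ≤ a i i := fun i => real_inner_self_nonneg
  have hu : ∀ i j, i ≠ j → a i i * a j j - a i j * a i j = 1 := by
    have keyl : ∀ p q : Fin n, p < q → a p p * a q q - a p q * a p q = 1 := by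
      intro p q hpq
      have h1 := hunit p q hpq
      have h2 : (⟪wV (T (ε p)) (T (ε q)), wV (T (ε p)) (T (ε q))⟫ : ℝ) = 1 := by
        rw [real_inner_self_eq_norm_mul_norm, h1]; norm_num
      rw [hVgram] at h2
      have hsym : (⟪T (ε q), T (ε p)⟫ : ℝ) = ⟪T (ε p), T (ε q)⟫ := real_inner_comm _ _
      rw [hsym] at h2
      exact h2
    intro i j hij
    rcases hij.lt_or_gt with h | h
    · exact keyl i j h
    · have h' := keyl j i h
      rw [asymm j i] at h'
      linear_combination h'
  have key : ∀ i j k : Fin n, i ≠ j → i ≠ k → j ≠ k → a i j * a k k = a i k * a j k := by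
    intro i j k hij hik hjk
    have h1 := contr (ε i + ε j) (ε k)
    have h2 := contr (ε i - ε j) (ε k)
    simp only [map_add, map_sub, inner_add_left, inner_add_right, inner_sub_left,
      inner_sub_right, horth, if_pos rfl, if_neg hij, if_neg hij.symm, if_neg hik,
      if_neg hik.symm, if_neg hjk, if_neg hjk.symm, if_true] at h1 h2
    norm_num at h1 h2
    have huik := hu i k hik
    have hujk := hu j k hjk
    have s1 : a i j = a j i := asymm i j
    have s2 : a i k = a k i := asymm i k
    have s3 : a j k = a k j := asymm j k
    simp only [ha] at huik hujk s1 s2 s3 ⊢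
    rw [← s1, ← s2, ← s3] at h1 h2
    simp only [real_inner_self_eq_norm_sq] at huik hujk ⊢
    apply le_antisymm
    · nlinarith [h1, huik, hujk]
    · nlinarith [h2, huik, hujk]
  have hfin := stmt_15_aux n hn a asymm apos hu key
  have horthf : Orthonormal ℝ (fun i => T (ε i)) := by
    rw [orthonormal_iff_ite]
    intro i j
    simpa using hfin i j
  intro x
  have hx : ∑ i, ε.repr x i • ε i = x := ε.sum_repr x
  have hTx : T x = ∑ i, ε.repr x i • T (ε i) := by
    conv_lhs => rw [← hx]
    rw [map_sum]
    simp [map_smul]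
  have h1 : (⟪T x, T x⟫ : ℝ) = ∑ i, ε.repr x i * ε.repr x i := by
    rw [hTx]
    simpa using horthf.inner_sum (fun i => ε.repr x i) (fun i => ε.repr x i) Finset.univ
  have h2 : (⟪x, x⟫ : ℝ) = ∑ i, ε.repr x i * ε.repr x i := by
    conv_lhs => rw [← hx]
    simpa using ε.orthonormal.inner_sum (fun i => ε.repr x i) (fun i => ε.repr x i) Finset.univ
  have h3 : ‖T x‖ * ‖T x‖ = ‖x‖ * ‖x‖ := by
    rw [← real_inner_self_eq_norm_mul_norm, ← real_inner_self_eq_norm_mul_norm, h1, h2]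
  nlinarith [norm_nonneg (T x), norm_nonneg x, h3]
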